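/- arXiv:2110.03685 — 2 statements merged into one kernel-verified Lean document; each statement's English description precedes it below -/
import Mathlib

section
/- Define the adjusted operator D := [B,[A,B]] for the integrable kinetic energy K(q,p) = Σ_{i,j} a_{ij}(q) pᵢ pⱼ + Σᵢ bᵢ(q) pᵢ and smooth potential V. Then for every index i, D applied to the coordinate functions satisfies D qᵢ = 0 and D pᵢ (q,p) = Σ_{j,k} ( 2 V_{qᵢqⱼ}(q) V_{q_k}(q) K_{pⱼp_k}(q,p) + V_{qⱼ}(q) V_{q_k}(q) K_{qᵢpⱼp_k}(q,p) ); that is, D equals 2 B∘A∘B − B∘B∘A on coordinate functions and is a momentum-version operator. -/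
open scoped BigOperators

/-- Partial derivative with respect to the coordinate `qᵢ` of a function on phase space. -/
noncomputable def pder_q {n : ℕ} (F : (Fin n → ℝ) × (Fin n → ℝ) → ℝ)
    (i : Fin n) (z : (Fin n → ℝ) × (Fin n → ℝ)) : ℝ :=
  fderiv ℝ F z (Pi.single i 1, 0)

/-- Partial derivative with respect to the momentum `pᵢ` of a function on phase space. -/
noncomputable def pder_p {n : ℕ} (F : (Fin n → ℝ) × (Fin n → ℝ) → ℝ)
    (i : Fin n) (z : (Fin n → ℝ) × (Fin n → ℝ)) : ℝ :=
  fderiv ℝ F z (0, Pi.single i 1)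

/-- The integrable kinetic energy `K(q,p) = Σ_{i,j} a_{ij}(q) pᵢ pⱼ + Σᵢ bᵢ(q) pᵢ`. -/
noncomputable def Kfun {n : ℕ} (a : Fin n → Fin n → (Fin n → ℝ) → ℝ)
    (b : Fin n → (Fin n → ℝ) → ℝ) (z : (Fin n → ℝ) × (Fin n → ℝ)) : ℝ :=
  (∑ i, ∑ j, a i j z.1 * z.2 i * z.2 j) + ∑ i, b i z.1 * z.2 i

/-- The operator `A F = Σᵢ (K_{pᵢ} ∂F/∂qᵢ − K_{qᵢ} ∂F/∂pᵢ)` associated with `K`. -/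
noncomputable def opA {n : ℕ} (a : Fin n → Fin n → (Fin n → ℝ) → ℝ)
    (b : Fin n → (Fin n → ℝ) → ℝ) (F : (Fin n → ℝ) × (Fin n → ℝ) → ℝ) :
    (Fin n → ℝ) × (Fin n → ℝ) → ℝ :=
  fun z => ∑ i, (pder_p (Kfun a b) i z * pder_q F i z - pder_q (Kfun a b) i z * pder_p F i z)

/-- The operator `B F = −Σᵢ V_{qᵢ} ∂F/∂pᵢ`, associated with the potential `V`. -/
noncomputable def opB {n : ℕ} (V : (Fin n → ℝ) → ℝ)
    (F : (Fin n → ℝ) × (Fin n → ℝ) → ℝ) :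
    (Fin n → ℝ) × (Fin n → ℝ) → ℝ :=
  fun z => -∑ i, fderiv ℝ V z.1 (Pi.single i 1) * pder_p F i z

/-- Second partial derivative `K_{pⱼp_k} = ∂²K/∂pⱼ∂p_k`. -/
noncomputable def Kpp {n : ℕ} (a : Fin n → Fin n → (Fin n → ℝ) → ℝ)
    (b : Fin n → (Fin n → ℝ) → ℝ) (j k : Fin n)
    (z : (Fin n → ℝ) × (Fin n → ℝ)) : ℝ :=
  fderiv ℝ (fun w => pder_p (Kfun a b) k w) z (0, Pi.single j 1)

/-- Third partial derivative `K_{qᵢpⱼp_k} = ∂³K/∂qᵢ∂pⱼ∂p_k`. -/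
noncomputable def Kqpp {n : ℕ} (a : Fin n → Fin n → (Fin n → ℝ) → ℝ)
    (b : Fin n → (Fin n → ℝ) → ℝ) (i j k : Fin n)
    (z : (Fin n → ℝ) × (Fin n → ℝ)) : ℝ :=
  fderiv ℝ (fun w => Kpp a b j k w) z (Pi.single i 1, 0)

/-- Second partial derivative `V_{qᵢqⱼ} = ∂²V/∂qᵢ∂qⱼ`. -/
noncomputable def Vqq {n : ℕ} (V : (Fin n → ℝ) → ℝ) (i j : Fin n) (q : Fin n → ℝ) : ℝ :=
  fderiv ℝ (fun q' => fderiv ℝ V q' (Pi.single j 1)) q (Pi.single i 1)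

/-- The commutator `[A,B] = A∘B − B∘A`. -/
noncomputable def commAB {n : ℕ} (a : Fin n → Fin n → (Fin n → ℝ) → ℝ)
    (b : Fin n → (Fin n → ℝ) → ℝ) (V : (Fin n → ℝ) → ℝ)
    (F : (Fin n → ℝ) × (Fin n → ℝ) → ℝ) :
    (Fin n → ℝ) × (Fin n → ℝ) → ℝ :=
  fun z => opA a b (opB V F) z - opB V (opA a b F) z

/-- The adjusted operator `D = [B,[A,B]] = B∘[A,B] − [A,B]∘B`. -/
noncomputable def opD {n : ℕ} (a : Fin n → Fin n → (Fin n → ℝ) → ℝ)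
    (b : Fin n → (Fin n → ℝ) → ℝ) (V : (Fin n → ℝ) → ℝ)
    (F : (Fin n → ℝ) × (Fin n → ℝ) → ℝ) :
    (Fin n → ℝ) × (Fin n → ℝ) → ℝ :=
  fun z => opB V (commAB a b V F) z - commAB a b V (opB V F) z

variable {n : ℕ}

/-- canonical form -/
noncomputable def CF (g2 : Fin n → Fin n → (Fin n → ℝ) → ℝ) (g1 : Fin n → (Fin n → ℝ) → ℝ)
    (g0 : (Fin n → ℝ) → ℝ) (z : (Fin n → ℝ) × (Fin n → ℝ)) : ℝ :=
  (∑ l, ∑ m, g2 l m z.1 * z.2 l * z.2 m) + (∑ l, g1 l z.1 * z.2 l) + g0 z.1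

noncomputable def dq (g : (Fin n → ℝ) → ℝ) (k : Fin n) (q : Fin n → ℝ) : ℝ :=
  fderiv ℝ g q (Pi.single k 1)

lemma sm_dq {g : (Fin n → ℝ) → ℝ} (hg : ContDiff ℝ (⊤ : ℕ∞) g) (k : Fin n) :
    ContDiff ℝ (⊤ : ℕ∞) (dq g k) :=
  (hg.fderiv_right (by exact_mod_cast le_top)).clm_apply contDiff_const

lemma hasF_q {g : (Fin n → ℝ) → ℝ} (hg : ContDiff ℝ (⊤ : ℕ∞) g)
    (z : (Fin n → ℝ) × (Fin n → ℝ)) :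
    HasFDerivAt (fun w : (Fin n → ℝ) × (Fin n → ℝ) => g w.1)
      ((fderiv ℝ g z.1).comp (ContinuousLinearMap.fst ℝ (Fin n → ℝ) (Fin n → ℝ))) z :=
  ((hg.differentiable (by simp) z.1).hasFDerivAt).comp z hasFDerivAt_fst

lemma hasF_p (l : Fin n) (z : (Fin n → ℝ) × (Fin n → ℝ)) :
    HasFDerivAt (fun w : (Fin n → ℝ) × (Fin n → ℝ) => w.2 l)
      ((ContinuousLinearMap.proj l).comp (ContinuousLinearMap.snd ℝ (Fin n → ℝ) (Fin n → ℝ))) z :=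
  ((ContinuousLinearMap.proj l).comp (ContinuousLinearMap.snd ℝ (Fin n → ℝ) (Fin n → ℝ))).hasFDerivAt

lemma fderiv_CF_apply {g2 : Fin n → Fin n → (Fin n → ℝ) → ℝ} {g1 : Fin n → (Fin n → ℝ) → ℝ}
    {g0 : (Fin n → ℝ) → ℝ} (hg2 : ∀ l m, ContDiff ℝ (⊤ : ℕ∞) (g2 l m))
    (hg1 : ∀ l, ContDiff ℝ (⊤ : ℕ∞) (g1 l)) (hg0 : ContDiff ℝ (⊤ : ℕ∞) g0)
    (z : (Fin n → ℝ) × (Fin n → ℝ)) (u v : Fin n → ℝ) :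
    fderiv ℝ (CF g2 g1 g0) z (u, v) =
      (∑ l, ∑ m, (fderiv ℝ (g2 l m) z.1 u * z.2 l * z.2 m + g2 l m z.1 * v l * z.2 m +
        g2 l m z.1 * z.2 l * v m)) +
      (∑ l, (fderiv ℝ (g1 l) z.1 u * z.2 l + g1 l z.1 * v l)) + fderiv ℝ g0 z.1 u := by
  have h2 : ∀ l ∈ Finset.univ, HasFDerivAt
      (fun w : (Fin n → ℝ) × (Fin n → ℝ) => ∑ m, g2 l m w.1 * w.2 l * w.2 m) _ z :=
    fun l _ => HasFDerivAt.fun_sum (fun m _ => ((hasF_q (hg2 l m) z).mul (hasF_p l z)).mul (hasF_p m z))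
  have h1 : ∀ l ∈ Finset.univ, HasFDerivAt
      (fun w : (Fin n → ℝ) × (Fin n → ℝ) => g1 l w.1 * w.2 l) _ z :=
    fun l _ => (hasF_q (hg1 l) z).mul (hasF_p l z)
  have h := ((HasFDerivAt.fun_sum h2).fun_add (HasFDerivAt.fun_sum h1)).fun_add (hasF_q hg0 z)
  rw [show CF g2 g1 g0 = (fun w => ((∑ l, ∑ m, g2 l m w.1 * w.2 l * w.2 m) +
      ∑ l, g1 l w.1 * w.2 l) + g0 w.1) from rfl] at *
  rw [h.fderiv]
  simp [ContinuousLinearMap.sum_apply, ContinuousLinearMap.add_apply,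
    ContinuousLinearMap.smul_apply, ContinuousLinearMap.comp_apply, smul_eq_mul]
  ring_nf
  congr 1
  · exact Finset.sum_congr rfl fun l _ => Finset.sum_congr rfl fun m _ => by ring
  · exact Finset.sum_congr rfl fun l _ => by ring

lemma pder_p_CF {g2 : Fin n → Fin n → (Fin n → ℝ) → ℝ} {g1 : Fin n → (Fin n → ℝ) → ℝ}
    {g0 : (Fin n → ℝ) → ℝ} (hg2 : ∀ l m, ContDiff ℝ (⊤ : ℕ∞) (g2 l m))
    (hg1 : ∀ l, ContDiff ℝ (⊤ : ℕ∞) (g1 l)) (hg0 : ContDiff ℝ (⊤ : ℕ∞) g0)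
    (k : Fin n) (z : (Fin n → ℝ) × (Fin n → ℝ)) :
    pder_p (CF g2 g1 g0) k z =
      (∑ m, (g2 k m z.1 + g2 m k z.1) * z.2 m) + g1 k z.1 := by
  rw [pder_p, fderiv_CF_apply hg2 hg1 hg0 z 0 (Pi.single k 1)]
  simp [Pi.single_apply, mul_ite, ite_mul, Finset.sum_ite_eq, Finset.sum_ite_eq',
    Finset.sum_add_distrib, add_mul]

lemma pder_q_CF {g2 : Fin n → Fin n → (Fin n → ℝ) → ℝ} {g1 : Fin n → (Fin n → ℝ) → ℝ}
    {g0 : (Fin n → ℝ) → ℝ} (hg2 : ∀ l m, ContDiff ℝ (⊤ : ℕ∞) (g2 l m))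
    (hg1 : ∀ l, ContDiff ℝ (⊤ : ℕ∞) (g1 l)) (hg0 : ContDiff ℝ (⊤ : ℕ∞) g0)
    (k : Fin n) (z : (Fin n → ℝ) × (Fin n → ℝ)) :
    pder_q (CF g2 g1 g0) k z =
      CF (fun l m => dq (g2 l m) k) (fun l => dq (g1 l) k) (dq g0 k) z := by
  rw [pder_q, fderiv_CF_apply hg2 hg1 hg0 z (Pi.single k 1) 0]
  simp [CF, dq]

lemma dq_zero (k : Fin n) (q : Fin n → ℝ) : dq (fun _ => (0:ℝ)) k q = 0 := by
  simp [dq]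

lemma dq_neg {g : (Fin n → ℝ) → ℝ} (k : Fin n) (q : Fin n → ℝ) :
    dq (fun x => -(g x)) k q = -(dq g k q) := by
  simp [dq, fderiv_neg]

lemma dq_add {g h : (Fin n → ℝ) → ℝ} (hg : ContDiff ℝ (⊤ : ℕ∞) g)
    (hh : ContDiff ℝ (⊤ : ℕ∞) h) (k : Fin n) (q : Fin n → ℝ) :
    dq (fun x => g x + h x) k q = dq g k q + dq h k q := by
  rw [dq, fderiv_fun_add ((hg.differentiable (by simp)).differentiableAt)
    ((hh.differentiable (by simp)).differentiableAt)]
  rfl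

lemma Kfun_eq (a : Fin n → Fin n → (Fin n → ℝ) → ℝ) (b : Fin n → (Fin n → ℝ) → ℝ) :
    Kfun a b = CF a b (fun _ => 0) := funext fun z => by simp [Kfun, CF]

lemma sum_mul_linear (f : Fin n → ℝ) (c : Fin n → Fin n → ℝ) (d : Fin n → ℝ) (p : Fin n → ℝ) :
    ∑ j, f j * ((∑ m, c j m * p m) + d j) =
      (∑ m, (∑ j, f j * c j m) * p m) + ∑ j, f j * d j := by
  simp only [mul_add, Finset.sum_add_distrib, Finset.mul_sum]
  rw [Finset.sum_comm]
  simp [Finset.sum_mul, mul_assoc]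

lemma pder_q_coord1 (i k : Fin n) (z : (Fin n → ℝ) × (Fin n → ℝ)) :
    pder_q (fun w => w.1 i) k z = (Pi.single k 1 : Fin n → ℝ) i := by
  have h : (fun w : (Fin n → ℝ) × (Fin n → ℝ) => w.1 i) =
      ⇑((ContinuousLinearMap.proj i).comp (ContinuousLinearMap.fst ℝ (Fin n → ℝ) (Fin n → ℝ))) := rfl
  rw [pder_q, h, ContinuousLinearMap.fderiv]
  rfl

lemma pder_p_coord1 (i k : Fin n) (z : (Fin n → ℝ) × (Fin n → ℝ)) :
    pder_p (fun w => w.1 i) k z = 0 := by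
  have h : (fun w : (Fin n → ℝ) × (Fin n → ℝ) => w.1 i) =
      ⇑((ContinuousLinearMap.proj i).comp (ContinuousLinearMap.fst ℝ (Fin n → ℝ) (Fin n → ℝ))) := rfl
  rw [pder_p, h, ContinuousLinearMap.fderiv]
  rfl

lemma pder_q_coord2 (i k : Fin n) (z : (Fin n → ℝ) × (Fin n → ℝ)) :
    pder_q (fun w => w.2 i) k z = 0 := by
  have h : (fun w : (Fin n → ℝ) × (Fin n → ℝ) => w.2 i) =
      ⇑((ContinuousLinearMap.proj i).comp (ContinuousLinearMap.snd ℝ (Fin n → ℝ) (Fin n → ℝ))) := rfl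
  rw [pder_q, h, ContinuousLinearMap.fderiv]
  rfl

lemma pder_p_coord2 (i k : Fin n) (z : (Fin n → ℝ) × (Fin n → ℝ)) :
    pder_p (fun w => w.2 i) k z = (Pi.single k 1 : Fin n → ℝ) i := by
  have h : (fun w : (Fin n → ℝ) × (Fin n → ℝ) => w.2 i) =
      ⇑((ContinuousLinearMap.proj i).comp (ContinuousLinearMap.snd ℝ (Fin n → ℝ) (Fin n → ℝ))) := rfl
  rw [pder_p, h, ContinuousLinearMap.fderiv]
  rfl

lemma opA_zero (a : Fin n → Fin n → (Fin n → ℝ) → ℝ) (b : Fin n → (Fin n → ℝ) → ℝ) :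
    opA a b (fun _ => (0:ℝ)) = fun _ => 0 := by
  funext z
  simp [opA, pder_q, pder_p]

lemma opB_CF {g2 : Fin n → Fin n → (Fin n → ℝ) → ℝ} {g1 : Fin n → (Fin n → ℝ) → ℝ}
    {g0 : (Fin n → ℝ) → ℝ} (V : (Fin n → ℝ) → ℝ)
    (hg2 : ∀ l m, ContDiff ℝ (⊤ : ℕ∞) (g2 l m))
    (hg1 : ∀ l, ContDiff ℝ (⊤ : ℕ∞) (g1 l)) (hg0 : ContDiff ℝ (⊤ : ℕ∞) g0) :
    opB V (CF g2 g1 g0) =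
      CF (fun _ _ _ => 0)
        (fun m q' => ∑ j, (-(dq V j q')) * (g2 j m q' + g2 m j q'))
        (fun q' => ∑ j, (-(dq V j q')) * g1 j q') := by
  funext z
  simp only [opB]
  have : ∀ j : Fin n, pder_p (CF g2 g1 g0) j z =
      (∑ m, (g2 j m z.1 + g2 m j z.1) * z.2 m) + g1 j z.1 :=
    fun j => pder_p_CF hg2 hg1 hg0 j z
  simp only [this]
  rw [← Finset.sum_neg_distrib]
  simp only [neg_mul_eq_neg_mul]
  rw [CF]
  simp only [zero_mul, Finset.sum_const_zero, zero_add]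
  exact sum_mul_linear (fun j => -(dq V j z.1)) (fun j m => g2 j m z.1 + g2 m j z.1)
    (fun j => g1 j z.1) z.2

lemma CF_sub (g2 h2 : Fin n → Fin n → (Fin n → ℝ) → ℝ) (g1 h1 : Fin n → (Fin n → ℝ) → ℝ)
    (g0 h0 : (Fin n → ℝ) → ℝ) :
    (fun z => CF g2 g1 g0 z - CF h2 h1 h0 z) =
      CF (fun l m q' => g2 l m q' - h2 l m q') (fun l q' => g1 l q' - h1 l q')
        (fun q' => g0 q' - h0 q') := by
  funext z
  simp only [CF, sub_mul, Finset.sum_sub_distrib]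
  ring

lemma opA_q {a : Fin n → Fin n → (Fin n → ℝ) → ℝ} {b : Fin n → (Fin n → ℝ) → ℝ}
    {g0 : (Fin n → ℝ) → ℝ} (ha : ∀ i j, ContDiff ℝ (⊤ : ℕ∞) (a i j))
    (hb : ∀ i, ContDiff ℝ (⊤ : ℕ∞) (b i)) (hg0 : ContDiff ℝ (⊤ : ℕ∞) g0) :
    opA a b (CF (fun _ _ _ => 0) (fun _ _ => 0) g0) =
      CF (fun _ _ _ => 0) (fun m q' => ∑ j, dq g0 j q' * (a j m q' + a m j q'))
        (fun q' => ∑ j, dq g0 j q' * b j q') := by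
  have hz2 : ∀ l m : Fin n, ContDiff ℝ (⊤ : ℕ∞) ((fun (_ _ : Fin n) (_ : Fin n → ℝ) => (0:ℝ)) l m) :=
    fun _ _ => contDiff_const
  have hz1 : ∀ l : Fin n, ContDiff ℝ (⊤ : ℕ∞) ((fun (_ : Fin n) (_ : Fin n → ℝ) => (0:ℝ)) l) := fun _ => contDiff_const
  funext z
  simp only [opA, Kfun_eq a b, pder_p_CF ha hb contDiff_const,
    pder_q_CF hz2 hz1 hg0, pder_p_CF hz2 hz1 hg0]
  simp only [CF, dq_zero, zero_mul, add_zero, zero_add, mul_zero, sub_zero,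
    Finset.sum_const_zero]
  rw [show (∑ j, ((∑ m, (a j m z.1 + a m j z.1) * z.2 m) + b j z.1) * dq g0 j z.1) =
      ∑ j, dq g0 j z.1 * ((∑ m, (a j m z.1 + a m j z.1) * z.2 m) + b j z.1) from
    Finset.sum_congr rfl fun j _ => mul_comm _ _]
  exact sum_mul_linear (fun j => dq g0 j z.1) (fun j m => a j m z.1 + a m j z.1)
    (fun j => b j z.1) z.2

lemma vqq_symm {V : (Fin n → ℝ) → ℝ} (hV : ContDiff ℝ (⊤ : ℕ∞) V) (i j : Fin n)
    (q : Fin n → ℝ) : Vqq V i j q = Vqq V j i q := by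
  have hf : ∀ y, HasFDerivAt V (fderiv ℝ V y) y := fun y =>
    ((hV.differentiable (by simp)) y).hasFDerivAt
  have hc : ContDiff ℝ (⊤ : ℕ∞) (fderiv ℝ V) := hV.fderiv_right (by exact_mod_cast le_top)
  have hd2 : HasFDerivAt (fderiv ℝ V) (fderiv ℝ (fderiv ℝ V) q) q :=
    ((hc.differentiable (by simp)) q).hasFDerivAt
  have key : ∀ v w : Fin n → ℝ, fderiv ℝ (fun q' => fderiv ℝ V q' v) q w =
      fderiv ℝ (fderiv ℝ V) q w v := by
    intro v w
    have hcomp := ((ContinuousLinearMap.apply ℝ ℝ v).hasFDerivAt (x := fderiv ℝ V q)).comp q hd2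
    have : fderiv ℝ (fun q' => fderiv ℝ V q' v) q =
        (ContinuousLinearMap.apply ℝ ℝ v).comp (fderiv ℝ (fderiv ℝ V) q) := hcomp.fderiv
    rw [this]; rfl
  rw [Vqq, Vqq, key, key]
  exact second_derivative_symmetric hf hd2 _ _

lemma kpp_fun_eq {a : Fin n → Fin n → (Fin n → ℝ) → ℝ} {b : Fin n → (Fin n → ℝ) → ℝ}
    (ha : ∀ i j, ContDiff ℝ (⊤ : ℕ∞) (a i j)) (hb : ∀ i, ContDiff ℝ (⊤ : ℕ∞) (b i))
    (k : Fin n) :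
    (fun w => pder_p (Kfun a b) k w) =
      CF (fun _ _ _ => 0) (fun m q' => a k m q' + a m k q') (b k) := by
  funext z
  rw [Kfun_eq a b, pder_p_CF ha hb contDiff_const k z]
  simp [CF]

lemma kpp_eq {a : Fin n → Fin n → (Fin n → ℝ) → ℝ} {b : Fin n → (Fin n → ℝ) → ℝ}
    (ha : ∀ i j, ContDiff ℝ (⊤ : ℕ∞) (a i j)) (hb : ∀ i, ContDiff ℝ (⊤ : ℕ∞) (b i))
    (j k : Fin n) (z : (Fin n → ℝ) × (Fin n → ℝ)) :
    Kpp a b j k z = a k j z.1 + a j k z.1 := by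
  have h : Kpp a b j k z = pder_p (fun w => pder_p (Kfun a b) k w) j z := rfl
  rw [h, kpp_fun_eq ha hb k, pder_p_CF (fun _ _ => contDiff_const)
    (fun m => (ha k m).add (ha m k)) (hb k) j z]
  simp

lemma kqpp_eq {a : Fin n → Fin n → (Fin n → ℝ) → ℝ} {b : Fin n → (Fin n → ℝ) → ℝ}
    (ha : ∀ i j, ContDiff ℝ (⊤ : ℕ∞) (a i j)) (hb : ∀ i, ContDiff ℝ (⊤ : ℕ∞) (b i))
    (i j k : Fin n) (z : (Fin n → ℝ) × (Fin n → ℝ)) :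
    Kqpp a b i j k z = dq (a k j) i z.1 + dq (a j k) i z.1 := by
  have h : Kqpp a b i j k z = pder_q (fun w => Kpp a b j k w) i z := rfl
  have h2 : (fun w => Kpp a b j k w) =
      CF (fun (_ _ : Fin n) (_ : Fin n → ℝ) => 0) (fun (_ : Fin n) (_ : Fin n → ℝ) => 0)
        (fun q' => a k j q' + a j k q') := by
    funext w
    rw [kpp_eq ha hb j k w]
    simp [CF]
  rw [h, h2, pder_q_CF (fun _ _ => contDiff_const) (fun _ => contDiff_const)
    ((ha k j).add (ha j k)) i z]
  simp [CF, dq_zero]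
  exact dq_add (ha k j) (ha j k) i z.1

lemma opB_zero (V : (Fin n → ℝ) → ℝ) : opB V (fun _ => (0:ℝ)) = fun _ => 0 := by
  funext z
  simp [opB, pder_p]

lemma commAB_zero (a : Fin n → Fin n → (Fin n → ℝ) → ℝ) (b : Fin n → (Fin n → ℝ) → ℝ)
    (V : (Fin n → ℝ) → ℝ) : commAB a b V (fun _ => (0:ℝ)) = fun _ => 0 := by
  funext z
  show opA a b (opB V (fun _ => (0:ℝ))) z - opB V (opA a b (fun _ => (0:ℝ))) z = 0
  simp [opB_zero, opA_zero]

/-- `D qᵢ = 0` and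
`D pᵢ(q,p) = Σ_{j,k} (2 V_{qᵢqⱼ} V_{q_k} K_{pⱼp_k} + V_{qⱼ} V_{q_k} K_{qᵢpⱼp_k})`;
moreover `D` agrees with `2 B∘A∘B − B∘B∘A` on the coordinate functions `pᵢ`, hence is a
momentum-version operator. -/
theorem adjusted_operator_D {n : ℕ} (a : Fin n → Fin n → (Fin n → ℝ) → ℝ)
    (b : Fin n → (Fin n → ℝ) → ℝ) (V : (Fin n → ℝ) → ℝ)
    (ha : ∀ i j, ContDiff ℝ (⊤ : ℕ∞) (a i j)) (hb : ∀ i, ContDiff ℝ (⊤ : ℕ∞) (b i))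
    (hV : ContDiff ℝ (⊤ : ℕ∞) V) (i : Fin n) (q p : Fin n → ℝ) :
    opD a b V (fun w => w.1 i) (q, p) = 0 ∧
    opD a b V (fun w => w.2 i) (q, p) =
      ∑ j, ∑ k, (2 * Vqq V i j q * fderiv ℝ V q (Pi.single k 1) * Kpp a b j k (q, p) +
        fderiv ℝ V q (Pi.single j 1) * fderiv ℝ V q (Pi.single k 1) *
          Kqpp a b i j k (q, p)) ∧
    opD a b V (fun w => w.2 i) (q, p) =
      2 * opB V (opA a b (opB V (fun w => w.2 i))) (q, p) -
        opB V (opB V (opA a b (fun w => w.2 i))) (q, p) := by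
  have hzero2 : ∀ l m : Fin n, ContDiff ℝ (⊤ : ℕ∞)
      ((fun (_ _ : Fin n) (_ : Fin n → ℝ) => (0:ℝ)) l m) := fun _ _ => contDiff_const
  have hzero1 : ∀ l : Fin n, ContDiff ℝ (⊤ : ℕ∞)
      ((fun (_ : Fin n) (_ : Fin n → ℝ) => (0:ℝ)) l) := fun _ => contDiff_const
  have hVq : ∀ j : Fin n, ContDiff ℝ (⊤ : ℕ∞) (dq V j) := fun j => sm_dq hV j
  -- Part 1 : opD qᵢ = 0
  have hBq : opB V (fun w => w.1 i) = fun _ => (0:ℝ) := by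
    funext z; simp [opB, pder_p_coord1]
  have hAq : opA a b (fun w => w.1 i) =
      CF (fun (_ _ : Fin n) (_ : Fin n → ℝ) => 0) (fun m q' => a i m q' + a m i q') (b i) := by
    funext z
    simp only [opA, pder_q_coord1, pder_p_coord1, mul_zero, sub_zero]
    rw [Kfun_eq a b]
    simp [pder_p_CF ha hb contDiff_const, CF, Pi.single_apply, mul_ite, mul_one, mul_zero,
      Finset.sum_ite_eq]
  have hcommq : commAB a b V (fun w => w.1 i) =
      CF (fun (_ _ : Fin n) (_ : Fin n → ℝ) => 0) (fun (_ : Fin n) (_ : Fin n → ℝ) => 0)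
        (fun q' => ∑ j, dq V j q' * (a i j q' + a j i q')) := by
    funext z
    show opA a b (opB V (fun w => w.1 i)) z - opB V (opA a b (fun w => w.1 i)) z = _
    rw [hBq, opA_zero, hAq, opB_CF V hzero2 (fun m => (ha i m).add (ha m i)) (hb i)]
    simp [CF, Finset.sum_neg_distrib]
  have part1 : opD a b V (fun w => w.1 i) (q, p) = 0 := by
    show opB V (commAB a b V (fun w => w.1 i)) (q, p) -
      commAB a b V (opB V (fun w => w.1 i)) (q, p) = 0
    rw [hBq, commAB_zero, hcommq,
      opB_CF V hzero2 hzero1 (ContDiff.sum fun j _ => (hVq j).mul ((ha i j).add (ha j i)))]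
    simp [CF]
  -- Part 2/3 : the p-coordinate
  have dq_def : ∀ (g : (Fin n → ℝ) → ℝ) (k : Fin n) (q' : Fin n → ℝ),
      dq g k q' = fderiv ℝ g q' (Pi.single k 1) := fun _ _ _ => rfl
  have vqq_dq : ∀ (j k : Fin n) (q' : Fin n → ℝ), Vqq V j k q' = dq (dq V k) j q' :=
    fun _ _ _ => rfl
  have hnegVq : ContDiff ℝ (⊤ : ℕ∞) (fun q' => -(dq V i q')) := (hVq i).neg
  have hBp : opB V (fun w => w.2 i) =
      CF (fun (_ _ : Fin n) (_ : Fin n → ℝ) => 0) (fun (_ : Fin n) (_ : Fin n → ℝ) => 0)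
        (fun q' => -(dq V i q')) := by
    funext z
    simp only [opB, pder_p_coord2]
    simp [CF, Pi.single_apply, mul_ite, mul_one, mul_zero, Finset.sum_ite_eq, dq]
  have smNeg : ∀ j : Fin n, ContDiff ℝ (⊤ : ℕ∞) (dq (fun x => -(dq V i x)) j) :=
    fun j => sm_dq ((hVq i).neg) j
  have smP1 : ∀ l : Fin n, ContDiff ℝ (⊤ : ℕ∞)
      (fun q' => ∑ j, dq (fun x => -(dq V i x)) j q' * (a j l q' + a l j q')) :=
    fun l => ContDiff.sum fun j _ => (smNeg j).mul ((ha j l).add (ha l j))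
  have smP0 : ContDiff ℝ (⊤ : ℕ∞)
      (fun q' => ∑ j, dq (fun x => -(dq V i x)) j q' * b j q') :=
    ContDiff.sum fun j _ => (smNeg j).mul (hb j)
  have v1 : opB V (opA a b (opB V (fun w => w.2 i))) (q, p) =
      ∑ j, dq V j q * ∑ k, dq (dq V i) k q * (a k j q + a j k q) := by
    rw [hBp, opA_q ha hb hnegVq, opB_CF V hzero2 smP1 smP0]
    simp [CF, dq_neg, Finset.mul_sum]
  have hAp : opA a b (fun w => w.2 i) =
      CF (fun l m q' => -(dq (a l m) i q')) (fun l q' => -(dq (b l) i q'))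
        (fun _ => 0) := by
    funext z
    simp only [opA, pder_q_coord2, pder_p_coord2, mul_zero, zero_sub, zero_mul]
    rw [Kfun_eq a b]
    simp [pder_q_CF ha hb contDiff_const, CF, dq_zero, Pi.single_apply, mul_ite, mul_one,
      mul_zero, Finset.sum_ite_eq, neg_add, Finset.sum_neg_distrib, neg_mul]
    ring
  have smA2 : ∀ l m : Fin n, ContDiff ℝ (⊤ : ℕ∞) (fun q' => -(dq (a l m) i q')) :=
    fun l m => (sm_dq (ha l m) i).neg
  have smA1 : ∀ l : Fin n, ContDiff ℝ (⊤ : ℕ∞) (fun q' => -(dq (b l) i q')) :=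
    fun l => (sm_dq (hb l) i).neg
  have v2 : opB V (opB V (opA a b (fun w => w.2 i))) (q, p) =
      -∑ j, dq V j q * ∑ k, dq V k q * (dq (a k j) i q + dq (a j k) i q) := by
    rw [hAp, opB_CF V smA2 smA1 contDiff_const]
    rw [opB_CF V hzero2
      (fun m => ContDiff.sum fun j _ => ((hVq j).neg).mul ((smA2 j m).add (smA2 m j)))
      (ContDiff.sum fun j _ => ((hVq j).neg).mul (smA1 j))]
    simp [CF, Finset.mul_sum]
    rw [← Finset.sum_neg_distrib]
    refine Finset.sum_congr rfl fun j _ => ?_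
    rw [← Finset.sum_neg_distrib]
    refine Finset.sum_congr rfl fun k _ => ?_
    ring
  have hBBp : opB V (opB V (fun w => w.2 i)) = fun _ => (0:ℝ) := by
    funext z
    rw [hBp, opB_CF V hzero2 hzero1 hnegVq]
    simp [CF]
  have vcomm : commAB a b V (opB V (fun w => w.2 i)) (q, p) =
      -(∑ j, dq V j q * ∑ k, dq (dq V i) k q * (a k j q + a j k q)) := by
    show opA a b (opB V (opB V (fun w => w.2 i))) (q, p) -
      opB V (opA a b (opB V (fun w => w.2 i))) (q, p) = _
    rw [hBBp, opA_zero, v1]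
    simp
  have smM1 : ∀ l : Fin n, ContDiff ℝ (⊤ : ℕ∞)
      (fun q' => (∑ j, dq (fun x => -(dq V i x)) j q' * (a j l q' + a l j q')) -
        ∑ j, -(dq V j q') * (-(dq (a j l) i q') + -(dq (a l j) i q'))) :=
    fun l => (smP1 l).sub (ContDiff.sum fun j _ => ((hVq j).neg).mul
      (((sm_dq (ha j l) i).neg).add ((sm_dq (ha l j) i).neg)))
  have smM0 : ContDiff ℝ (⊤ : ℕ∞)
      (fun q' => (∑ j, dq (fun x => -(dq V i x)) j q' * b j q') -
        ∑ j, -(dq V j q') * -(dq (b j) i q')) :=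
    smP0.sub (ContDiff.sum fun j _ => ((hVq j).neg).mul ((sm_dq (hb j) i).neg))
  have v3 : opB V (commAB a b V (fun w => w.2 i)) (q, p) =
      ∑ j, dq V j q * (∑ k, dq (dq V i) k q * (a k j q + a j k q) +
        ∑ k, dq V k q * (dq (a k j) i q + dq (a j k) i q)) := by
    rw [show commAB a b V (fun w => w.2 i) =
      (fun z => opA a b (opB V fun w => w.2 i) z - opB V (opA a b fun w => w.2 i) z) from rfl]
    rw [hBp, opA_q ha hb hnegVq, hAp, opB_CF V smA2 smA1 contDiff_const, CF_sub,
      opB_CF V (fun l m => ((hzero2 l m).sub (hzero2 l m))) smM1 smM0]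
    simp [CF, dq_neg, Finset.mul_sum]
    rw [← Finset.sum_neg_distrib]
    refine Finset.sum_congr rfl fun j _ => ?_
    have hβ : (∑ k, dq V k q * (-dq (a k j) i q + -dq (a j k) i q)) =
        -∑ k, dq V k q * (dq (a k j) i q + dq (a j k) i q) := by
      rw [← Finset.sum_neg_distrib]
      exact Finset.sum_congr rfl fun k _ => by ring
    rw [hβ]
    ring
  have vD : opD a b V (fun w => w.2 i) (q, p) =
      (∑ j, dq V j q * (∑ k, dq (dq V i) k q * (a k j q + a j k q) +
        ∑ k, dq V k q * (dq (a k j) i q + dq (a j k) i q))) +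
      ∑ j, dq V j q * ∑ k, dq (dq V i) k q * (a k j q + a j k q) := by
    show opB V (commAB a b V (fun w => w.2 i)) (q, p) -
      commAB a b V (opB V (fun w => w.2 i)) (q, p) = _
    rw [v3, vcomm]
    ring
  have key : ∀ j k : Fin n,
      2 * Vqq V i j q * fderiv ℝ V q (Pi.single k 1) * Kpp a b j k (q, p) +
        fderiv ℝ V q (Pi.single j 1) * fderiv ℝ V q (Pi.single k 1) * Kqpp a b i j k (q, p) =
      2 * (dq V k q * (dq (dq V i) j q * (a k j q + a j k q))) +
        dq V j q * (dq V k q * (dq (a k j) i q + dq (a j k) i q)) := by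
    intro j k
    rw [kpp_eq ha hb, kqpp_eq ha hb,
      show Vqq V i j q = dq (dq V i) j q from (vqq_symm hV i j q).trans (vqq_dq j i q),
      ← dq_def V k q, ← dq_def V j q]
    ring
  have part2 : opD a b V (fun w => w.2 i) (q, p) =
      ∑ j, ∑ k, (2 * Vqq V i j q * fderiv ℝ V q (Pi.single k 1) * Kpp a b j k (q, p) +
        fderiv ℝ V q (Pi.single j 1) * fderiv ℝ V q (Pi.single k 1) *
          Kqpp a b i j k (q, p)) := by
    rw [vD]
    simp only [key]
    simp only [mul_add, Finset.sum_add_distrib, Finset.mul_sum]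
    have e1 : (∑ j : Fin n, ∑ k : Fin n, 2 * (dq V k q * (dq (dq V i) j q * a k j q))) =
        (∑ j : Fin n, ∑ k : Fin n, dq V j q * (dq (dq V i) k q * a j k q)) +
        ∑ j : Fin n, ∑ k : Fin n, dq V j q * (dq (dq V i) k q * a j k q) := by
      rw [Finset.sum_comm, ← Finset.sum_add_distrib]
      refine Finset.sum_congr rfl fun x _ => ?_
      rw [← Finset.sum_add_distrib]
      exact Finset.sum_congr rfl fun y _ => by ring
    have e2 : (∑ j : Fin n, ∑ k : Fin n, 2 * (dq V k q * (dq (dq V i) j q * a j k q))) =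
        (∑ j : Fin n, ∑ k : Fin n, dq V j q * (dq (dq V i) k q * a k j q)) +
        ∑ j : Fin n, ∑ k : Fin n, dq V j q * (dq (dq V i) k q * a k j q) := by
      rw [Finset.sum_comm, ← Finset.sum_add_distrib]
      refine Finset.sum_congr rfl fun x _ => ?_
      rw [← Finset.sum_add_distrib]
      exact Finset.sum_congr rfl fun y _ => by ring
    rw [e1, e2]
    ring
  have part3 : opD a b V (fun w => w.2 i) (q, p) =
      2 * opB V (opA a b (opB V (fun w => w.2 i))) (q, p) -
        opB V (opB V (opA a b (fun w => w.2 i))) (q, p) := by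
    rw [vD, v1, v2]
    simp only [mul_add, Finset.sum_add_distrib]
    ring
  exact ⟨part1, part2, part3⟩
end

section
/- Assume a_{ij} = a_{ji} for all i,j, and let τ be any real number. Then for every index i, the operator B + (τ²/24) D applied to the coordinate function pᵢ equals −∂/∂qᵢ of the modified potential V_{N2}(q) := V(q) − (τ²/12) Σ_{j,k} a_{jk}(q) V_{qⱼ}(q) V_{q_k}(q). Hence B + (τ²/24) D is the momentum-version Lie operator of V_{N2}, so the extended scheme N2 is a symplectic splitting scheme for the modified Hamiltonian J_{N2} = K + V_{N2}. -/
open scoped BigOperators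

/-- The modified potential `V_{N2}(q) = V(q) − (τ²/12) Σ_{j,k} a_{jk}(q) V_{qⱼ}(q) V_{q_k}(q)`. -/
noncomputable def VN2 {n : ℕ} (a : Fin n → Fin n → (Fin n → ℝ) → ℝ)
    (V : (Fin n → ℝ) → ℝ) (τ : ℝ) (q : Fin n → ℝ) : ℝ :=
  V q - (τ ^ 2 / 12) *
    ∑ j, ∑ k, a j k q * fderiv ℝ V q (Pi.single j 1) * fderiv ℝ V q (Pi.single k 1)

namespace N2Aux

open ContinuousLinearMap

variable {n : ℕ}

lemma wt1 : (1 : WithTop ℕ∞) ≤ ((⊤:ℕ∞) : WithTop ℕ∞) := by decide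
lemma wt2 : (2 : WithTop ℕ∞) ≤ ((⊤:ℕ∞) : WithTop ℕ∞) := by decide

lemma diffAt {f : (Fin n → ℝ) → ℝ} (hf : ContDiff ℝ (⊤:ℕ∞) f) (q : Fin n → ℝ) :
    DifferentiableAt ℝ f q := (hf.differentiable (by simp)).differentiableAt

lemma smooth_fd {f : (Fin n → ℝ) → ℝ} (hf : ContDiff ℝ (⊤:ℕ∞) f) (v : Fin n → ℝ) :
    ContDiff ℝ (⊤:ℕ∞) (fun q => fderiv ℝ f q v) :=
  (hf.fderiv_right (m := ((⊤:ℕ∞) : WithTop ℕ∞)) (by simp)).clm_apply contDiff_const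

lemma hasF_fst {f : (Fin n → ℝ) → ℝ} {z : (Fin n → ℝ) × (Fin n → ℝ)}
    (hf : DifferentiableAt ℝ f z.1) :
    HasFDerivAt (fun w : (Fin n → ℝ) × (Fin n → ℝ) => f w.1)
      ((fderiv ℝ f z.1).comp (fst ℝ (Fin n → ℝ) (Fin n → ℝ))) z :=
  hf.hasFDerivAt.comp z hasFDerivAt_fst

lemma hasF_p (j : Fin n) (z : (Fin n → ℝ) × (Fin n → ℝ)) :
    HasFDerivAt (fun w : (Fin n → ℝ) × (Fin n → ℝ) => w.2 j)
      ((proj j).comp (snd ℝ (Fin n → ℝ) (Fin n → ℝ))) z :=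
  ((proj (R := ℝ) (φ := fun _ : Fin n => ℝ) j).comp
    (snd ℝ (Fin n → ℝ) (Fin n → ℝ))).hasFDerivAt

/-- q-only functions -/
lemma pder_q_fst {f : (Fin n → ℝ) → ℝ} {z : (Fin n → ℝ) × (Fin n → ℝ)}
    (hf : DifferentiableAt ℝ f z.1) (i : Fin n) :
    pder_q (fun w => f w.1) i z = fderiv ℝ f z.1 (Pi.single i 1) := by
  rw [pder_q, (hasF_fst hf).fderiv]; simp

lemma pder_p_fst {f : (Fin n → ℝ) → ℝ} {z : (Fin n → ℝ) × (Fin n → ℝ)}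
    (hf : DifferentiableAt ℝ f z.1) (i : Fin n) :
    pder_p (fun w => f w.1) i z = 0 := by
  rw [pder_p, (hasF_fst hf).fderiv]; simp

/-- coordinate function -/
lemma pder_p_coord (i j : Fin n) (z : (Fin n → ℝ) × (Fin n → ℝ)) :
    pder_p (fun w => w.2 i) j z = if j = i then 1 else 0 := by
  rw [pder_p, (hasF_p i z).fderiv]
  simp [Pi.single_apply, eq_comm]

lemma pder_q_coord (i j : Fin n) (z : (Fin n → ℝ) × (Fin n → ℝ)) :
    pder_q (fun w => w.2 i) j z = 0 := by
  rw [pder_q, (hasF_p i z).fderiv]; simp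


lemma dsum_comm (f g : Fin n → Fin n → ℝ) (h : ∀ x y, f x y = g y x) :
    ∑ x, ∑ y, f x y = ∑ x, ∑ y, g x y := by
  rw [Finset.sum_comm]
  exact Finset.sum_congr rfl fun x _ => Finset.sum_congr rfl fun y _ => h y x

lemma pder_p_neg (F : (Fin n → ℝ) × (Fin n → ℝ) → ℝ) (j : Fin n) (z) :
    pder_p (fun w => -(F w)) j z = -(pder_p F j z) := by
  rw [pder_p, pder_p, fderiv_fun_neg]; simp

/-- affine normal form -/
lemma pder_p_aff (g : Fin n → (Fin n → ℝ) → ℝ) (h : (Fin n → ℝ) → ℝ)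
    (hg : ∀ j, ContDiff ℝ (⊤:ℕ∞) (g j)) (hh : ContDiff ℝ (⊤:ℕ∞) h)
    (m : Fin n) (z : (Fin n → ℝ) × (Fin n → ℝ)) :
    pder_p (fun w => (∑ j, g j w.1 * w.2 j) + h w.1) m z = g m z.1 := by
  have H : HasFDerivAt (fun w : (Fin n → ℝ) × (Fin n → ℝ) => (∑ j, g j w.1 * w.2 j) + h w.1)
      ((∑ j, ((g j z.1 • ((proj j).comp (snd ℝ (Fin n → ℝ) (Fin n → ℝ))))
        + z.2 j • ((fderiv ℝ (g j) z.1).comp (fst ℝ (Fin n → ℝ) (Fin n → ℝ)))))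
        + (fderiv ℝ h z.1).comp (fst ℝ (Fin n → ℝ) (Fin n → ℝ))) z := by
    exact (HasFDerivAt.fun_sum (fun j _ => (hasF_fst (diffAt (hg j) z.1)).mul (hasF_p j z))).add
      (hasF_fst (diffAt hh z.1))
  rw [pder_p, H.fderiv]
  simp [Pi.single_apply, Finset.sum_ite_eq', mul_comm]

/-- quadratic normal form, p-derivative -/
lemma pder_p_quad (c : Fin n → Fin n → (Fin n → ℝ) → ℝ) (d : Fin n → (Fin n → ℝ) → ℝ)
    (hc : ∀ j k, ContDiff ℝ (⊤:ℕ∞) (c j k)) (hd : ∀ j, ContDiff ℝ (⊤:ℕ∞) (d j))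
    (m : Fin n) (z : (Fin n → ℝ) × (Fin n → ℝ)) :
    pder_p (fun w => (∑ j, ∑ k, c j k w.1 * w.2 j * w.2 k) + ∑ j, d j w.1 * w.2 j) m z
      = (∑ k, c m k z.1 * z.2 k) + (∑ j, c j m z.1 * z.2 j) + d m z.1 := by
  have H : HasFDerivAt
      (fun w : (Fin n → ℝ) × (Fin n → ℝ) => (∑ j, ∑ k, c j k w.1 * w.2 j * w.2 k)
        + ∑ j, d j w.1 * w.2 j)
      ((∑ j, ∑ k, ((c j k z.1 * z.2 j) • ((proj k).comp (snd ℝ (Fin n → ℝ) (Fin n → ℝ)))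
          + z.2 k • (c j k z.1 • ((proj j).comp (snd ℝ (Fin n → ℝ) (Fin n → ℝ)))
            + z.2 j • ((fderiv ℝ (c j k) z.1).comp (fst ℝ (Fin n → ℝ) (Fin n → ℝ))))))
        + ∑ j, (d j z.1 • ((proj j).comp (snd ℝ (Fin n → ℝ) (Fin n → ℝ)))
          + z.2 j • ((fderiv ℝ (d j) z.1).comp (fst ℝ (Fin n → ℝ) (Fin n → ℝ))))) z := by
    exact (HasFDerivAt.fun_sum (fun j _ => HasFDerivAt.fun_sum (fun k _ =>
        ((hasF_fst (diffAt (hc j k) z.1)).mul (hasF_p j z)).mul (hasF_p k z)))).add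
      (HasFDerivAt.fun_sum (fun j _ => (hasF_fst (diffAt (hd j) z.1)).mul (hasF_p j z)))
  rw [pder_p, H.fderiv]
  simp only [ContinuousLinearMap.add_apply, ContinuousLinearMap.sum_apply,
    ContinuousLinearMap.smul_apply, ContinuousLinearMap.comp_apply,
    ContinuousLinearMap.coe_fst', ContinuousLinearMap.coe_snd',
    ContinuousLinearMap.proj_apply, smul_eq_mul, map_zero, mul_zero, zero_add, add_zero]
  simp only [Pi.single_apply, mul_ite, mul_one, mul_zero, Finset.sum_ite_eq',
    Finset.mem_univ, if_true, Finset.sum_add_distrib]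
  simp [Finset.sum_ite_irrel, Finset.sum_ite_eq', mul_comm]
  ring

/-- quadratic normal form, q-derivative -/
lemma pder_q_quad (c : Fin n → Fin n → (Fin n → ℝ) → ℝ) (d : Fin n → (Fin n → ℝ) → ℝ)
    (hc : ∀ j k, ContDiff ℝ (⊤:ℕ∞) (c j k)) (hd : ∀ j, ContDiff ℝ (⊤:ℕ∞) (d j))
    (i : Fin n) (z : (Fin n → ℝ) × (Fin n → ℝ)) :
    pder_q (fun w => (∑ j, ∑ k, c j k w.1 * w.2 j * w.2 k) + ∑ j, d j w.1 * w.2 j) i z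
      = (∑ j, ∑ k, fderiv ℝ (c j k) z.1 (Pi.single i 1) * z.2 j * z.2 k)
        + ∑ j, fderiv ℝ (d j) z.1 (Pi.single i 1) * z.2 j := by
  have H : HasFDerivAt
      (fun w : (Fin n → ℝ) × (Fin n → ℝ) => (∑ j, ∑ k, c j k w.1 * w.2 j * w.2 k)
        + ∑ j, d j w.1 * w.2 j)
      ((∑ j, ∑ k, ((c j k z.1 * z.2 j) • ((proj k).comp (snd ℝ (Fin n → ℝ) (Fin n → ℝ)))
          + z.2 k • (c j k z.1 • ((proj j).comp (snd ℝ (Fin n → ℝ) (Fin n → ℝ)))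
            + z.2 j • ((fderiv ℝ (c j k) z.1).comp (fst ℝ (Fin n → ℝ) (Fin n → ℝ))))))
        + ∑ j, (d j z.1 • ((proj j).comp (snd ℝ (Fin n → ℝ) (Fin n → ℝ)))
          + z.2 j • ((fderiv ℝ (d j) z.1).comp (fst ℝ (Fin n → ℝ) (Fin n → ℝ))))) z := by
    exact (HasFDerivAt.fun_sum (fun j _ => HasFDerivAt.fun_sum (fun k _ =>
        ((hasF_fst (diffAt (hc j k) z.1)).mul (hasF_p j z)).mul (hasF_p k z)))).add
      (HasFDerivAt.fun_sum (fun j _ => (hasF_fst (diffAt (hd j) z.1)).mul (hasF_p j z)))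
  rw [pder_q, H.fderiv]
  simp [mul_comm, mul_left_comm]



section
variable {n : ℕ} (a : Fin n → Fin n → (Fin n → ℝ) → ℝ) (b : Fin n → (Fin n → ℝ) → ℝ)
  (V : (Fin n → ℝ) → ℝ)

/-- first derivative of the potential -/
noncomputable def Vq (j : Fin n) (q : Fin n → ℝ) : ℝ := fderiv ℝ V q (Pi.single j 1)

/-- explicit K_p -/
noncomputable def Kp (k : Fin n) (z : (Fin n → ℝ) × (Fin n → ℝ)) : ℝ :=
  (∑ j, (a k j z.1 + a j k z.1) * z.2 j) + b k z.1

/-- explicit K_q -/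
noncomputable def KQ (i : Fin n) (z : (Fin n → ℝ) × (Fin n → ℝ)) : ℝ :=
  (∑ j, ∑ k, fderiv ℝ (a j k) z.1 (Pi.single i 1) * z.2 j * z.2 k)
    + ∑ j, fderiv ℝ (b j) z.1 (Pi.single i 1) * z.2 j

/-- explicit K_{q_i p_j} -/
noncomputable def KQP (i j : Fin n) (z : (Fin n → ℝ) × (Fin n → ℝ)) : ℝ :=
  (∑ k, (fderiv ℝ (a j k) z.1 (Pi.single i 1) + fderiv ℝ (a k j) z.1 (Pi.single i 1)) * z.2 k)
    + fderiv ℝ (b j) z.1 (Pi.single i 1)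

variable (ha : ∀ i j, ContDiff ℝ (⊤ : ℕ∞) (a i j)) (hb : ∀ i, ContDiff ℝ (⊤ : ℕ∞) (b i))
  (hV : ContDiff ℝ (⊤ : ℕ∞) V)

include ha hb in
lemma pder_p_K (k : Fin n) (z : (Fin n → ℝ) × (Fin n → ℝ)) :
    pder_p (Kfun a b) k z = Kp a b k z := by
  have h := pder_p_quad a b ha hb k z
  have e : pder_p (Kfun a b) k z
      = pder_p (fun w => (∑ j, ∑ k, a j k w.1 * w.2 j * w.2 k) + ∑ j, b j w.1 * w.2 j) k z := rfl
  rw [e, h, Kp]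
  simp [add_mul, Finset.sum_add_distrib]

include ha hb in
lemma pder_q_K (i : Fin n) (z : (Fin n → ℝ) × (Fin n → ℝ)) :
    pder_q (Kfun a b) i z = KQ a b i z := by
  have h := pder_q_quad a b ha hb i z
  exact h

include hV in
lemma schwarz (i j : Fin n) (q : Fin n → ℝ) : Vqq V i j q = Vqq V j i q := by
  have hd : DifferentiableAt ℝ (fderiv ℝ V) q :=
    (((hV.fderiv_right (m := ((⊤:ℕ∞) : WithTop ℕ∞)) (by simp))).differentiable (by simp)).differentiableAt
  have h1 : ∀ u v : Fin n → ℝ, fderiv ℝ (fun q' => fderiv ℝ V q' v) q u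
      = fderiv ℝ (fderiv ℝ V) q u v := by
    intro u v
    rw [fderiv_clm_apply hd (differentiableAt_const _)]
    simp
  have hs := (hV.contDiffAt (x := q)).isSymmSndFDerivAt (by rw [minSmoothness_of_isRCLikeNormedField]; exact wt2)
  rw [Vqq, Vqq, h1, h1]
  exact hs _ _

lemma opB_coord (W : (Fin n → ℝ) → ℝ) (i : Fin n) (z : (Fin n → ℝ) × (Fin n → ℝ)) :
    opB W (fun w => w.2 i) z = -(fderiv ℝ W z.1 (Pi.single i 1)) := by
  rw [opB]
  simp [pder_p_coord, mul_ite, Finset.sum_ite_eq']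

lemma opB_coord_fun (i : Fin n) :
    opB V (fun w => w.2 i) = fun z => -(Vq V i z.1) :=
  funext fun z => by rw [opB_coord]; rfl

include ha hb in
lemma opA_fst (f : (Fin n → ℝ) → ℝ) (hf : ContDiff ℝ (⊤:ℕ∞) f)
    (z : (Fin n → ℝ) × (Fin n → ℝ)) :
    opA a b (fun w => f w.1) z = ∑ j, Kp a b j z * fderiv ℝ f z.1 (Pi.single j 1) := by
  rw [opA]
  refine Finset.sum_congr rfl fun j _ => ?_
  rw [pder_p_K a b ha hb, pder_q_fst (diffAt hf z.1), pder_p_fst (diffAt hf z.1), mul_zero,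
    sub_zero]

include ha hb in
lemma opA_coord (i : Fin n) (z : (Fin n → ℝ) × (Fin n → ℝ)) :
    opA a b (fun w => w.2 i) z = -(KQ a b i z) := by
  rw [opA]
  have : ∀ j, pder_p (Kfun a b) j z * pder_q (fun w => w.2 i) j z
      - pder_q (Kfun a b) j z * pder_p (fun w => w.2 i) j z
      = -(KQ a b j z * (if j = i then 1 else 0)) := by
    intro j
    rw [pder_q_coord, pder_p_coord, pder_q_K a b ha hb, mul_zero, zero_sub]
  simp only [this]
  simp [Finset.sum_ite_eq']

include ha hb in
lemma pder_p_KQ (i j : Fin n) (z : (Fin n → ℝ) × (Fin n → ℝ)) :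
    pder_p (KQ a b i) j z = KQP a b i j z := by
  have h := pder_p_quad (fun j k => fun q => fderiv ℝ (a j k) q (Pi.single i 1))
    (fun j => fun q => fderiv ℝ (b j) q (Pi.single i 1))
    (fun j k => smooth_fd (ha j k) _) (fun j => smooth_fd (hb j) _) j z
  have e : pder_p (KQ a b i) j z = pder_p (fun w =>
      (∑ j', ∑ k, fderiv ℝ (a j' k) w.1 (Pi.single i 1) * w.2 j' * w.2 k)
        + ∑ j', fderiv ℝ (b j') w.1 (Pi.single i 1) * w.2 j') j z := rfl
  rw [e, h, KQP]
  simp [add_mul, Finset.sum_add_distrib]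

include ha hb hV in
lemma commAB_coord (i : Fin n) (z : (Fin n → ℝ) × (Fin n → ℝ)) :
    commAB a b V (fun w => w.2 i) z
      = -(∑ j, Kp a b j z * Vqq V j i z.1) - ∑ j, Vq V j z.1 * KQP a b i j z := by
  rw [commAB, opB_coord_fun V]
  have h1 : opA a b (fun z' => -(Vq V i z'.1)) z
      = -(∑ j, Kp a b j z * Vqq V j i z.1) := by
    rw [opA_fst a b ha hb (fun q => -(Vq V i q)) ((smooth_fd hV _).neg) z]
    rw [← Finset.sum_neg_distrib]
    refine Finset.sum_congr rfl fun j _ => ?_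
    have hv : fderiv ℝ (Vq V i) z.1 (Pi.single j 1) = Vqq V j i z.1 := rfl
    rw [fderiv_fun_neg, ContinuousLinearMap.neg_apply, hv]
    ring
  have h2 : opB V (opA a b (fun w => w.2 i)) z = ∑ j, Vq V j z.1 * KQP a b i j z := by
    have hA : opA a b (fun w : (Fin n → ℝ) × (Fin n → ℝ) => w.2 i)
        = fun z' => -(KQ a b i z') := funext fun z' => opA_coord a b ha hb i z'
    rw [hA, opB]
    rw [neg_eq_iff_eq_neg, ← Finset.sum_neg_distrib]
    refine Finset.sum_congr rfl fun j _ => ?_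
    rw [pder_p_neg, pder_p_KQ a b ha hb]
    have hv : fderiv ℝ V z.1 (Pi.single j 1) = Vq V j z.1 := rfl
    rw [hv]
    ring
  rw [h1, h2]

/-- coefficient functions for the affine (in `p`) normal forms -/
noncomputable def gA (i m : Fin n) (q : Fin n → ℝ) : ℝ :=
  -(∑ j, (a j m q + a m j q) * Vqq V j i q)

noncomputable def hA (i : Fin n) (q : Fin n → ℝ) : ℝ :=
  -(∑ j, b j q * Vqq V j i q)

noncomputable def gB2 (i m : Fin n) (q : Fin n → ℝ) : ℝ :=
  -(∑ j, Vq V j q * (fderiv ℝ (a j m) q (Pi.single i 1) + fderiv ℝ (a m j) q (Pi.single i 1)))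

noncomputable def hB2 (i : Fin n) (q : Fin n → ℝ) : ℝ :=
  -(∑ j, Vq V j q * fderiv ℝ (b j) q (Pi.single i 1))

include hV in
lemma smooth_Vqq (i j : Fin n) : ContDiff ℝ (⊤:ℕ∞) (Vqq V i j) :=
  smooth_fd (smooth_fd hV (Pi.single j 1)) (Pi.single i 1)

include ha hV in
lemma smooth_gA (i m : Fin n) : ContDiff ℝ (⊤:ℕ∞) (gA a V i m) :=
  (ContDiff.sum fun j _ => ((ha j m).add (ha m j)).mul (smooth_Vqq V hV j i)).neg

include hb hV in
lemma smooth_hA (i : Fin n) : ContDiff ℝ (⊤:ℕ∞) (hA b V i) :=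
  (ContDiff.sum fun j _ => (hb j).mul (smooth_Vqq V hV j i)).neg

include ha hV in
lemma smooth_gB2 (i m : Fin n) : ContDiff ℝ (⊤:ℕ∞) (gB2 a V i m) :=
  (ContDiff.sum fun j _ => (smooth_fd hV _).mul
    ((smooth_fd (ha j m) _).add (smooth_fd (ha m j) _))).neg

include hb hV in
lemma smooth_hB2 (i : Fin n) : ContDiff ℝ (⊤:ℕ∞) (hB2 b V i) :=
  (ContDiff.sum fun j _ => (smooth_fd hV _).mul (smooth_fd (hb j) _)).neg

lemma A1_fun (i : Fin n) :
    (fun z : (Fin n → ℝ) × (Fin n → ℝ) => -(∑ j, Kp a b j z * Vqq V j i z.1))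
      = fun z => (∑ m, gA a V i m z.1 * z.2 m) + hA b V i z.1 := by
  funext z
  simp only [Kp, gA, hA, add_mul, Finset.sum_mul, Finset.sum_add_distrib, neg_add,
    neg_mul, Finset.sum_neg_distrib]
  have h1 : ∑ x : Fin n, ∑ y : Fin n, a x y z.1 * z.2 y * Vqq V x i z.1
      = ∑ x : Fin n, ∑ y : Fin n, a y x z.1 * Vqq V y i z.1 * z.2 x :=
    dsum_comm _ _ (fun x y => by ring)
  have h2 : ∑ x : Fin n, ∑ y : Fin n, a y x z.1 * z.2 y * Vqq V x i z.1
      = ∑ x : Fin n, ∑ y : Fin n, a x y z.1 * Vqq V y i z.1 * z.2 x :=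
    dsum_comm _ _ (fun x y => by ring)
  linear_combination -h1 - h2

lemma C2_fun (i : Fin n) :
    (fun z : (Fin n → ℝ) × (Fin n → ℝ) => -(∑ j, Vq V j z.1 * KQP a b i j z))
      = fun z => (∑ m, gB2 a V i m z.1 * z.2 m) + hB2 b V i z.1 := by
  funext z
  simp only [KQP, gB2, hB2, mul_add, add_mul, Finset.mul_sum, Finset.sum_mul, neg_mul,
    neg_add, Finset.sum_add_distrib, Finset.sum_neg_distrib]
  have h1 : ∑ x : Fin n, ∑ y : Fin n,
        Vq V x z.1 * (fderiv ℝ (a x y) z.1 (Pi.single i 1) * z.2 y)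
      = ∑ x : Fin n, ∑ y : Fin n,
        Vq V y z.1 * fderiv ℝ (a y x) z.1 (Pi.single i 1) * z.2 x :=
    dsum_comm _ _ (fun x y => by ring)
  have h2 : ∑ x : Fin n, ∑ y : Fin n,
        Vq V x z.1 * (fderiv ℝ (a y x) z.1 (Pi.single i 1) * z.2 y)
      = ∑ x : Fin n, ∑ y : Fin n,
        Vq V y z.1 * fderiv ℝ (a x y) z.1 (Pi.single i 1) * z.2 x :=
    dsum_comm _ _ (fun x y => by ring)
  linear_combination -h1 - h2

include ha hb hV in
lemma commAB_fun (i : Fin n) :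
    commAB a b V (fun w => w.2 i)
      = fun z => (∑ m, (gA a V i m z.1 + gB2 a V i m z.1) * z.2 m)
          + (hA b V i z.1 + hB2 b V i z.1) := by
  funext z
  rw [commAB_coord a b V ha hb hV i z, sub_eq_add_neg,
    congrFun (A1_fun a b V i) z, congrFun (C2_fun a b V i) z]
  simp only [add_mul, Finset.sum_add_distrib]
  ring

include ha hb hV in
lemma pder_p_commAB (i k : Fin n) (z : (Fin n → ℝ) × (Fin n → ℝ)) :
    pder_p (commAB a b V (fun w => w.2 i)) k z = gA a V i k z.1 + gB2 a V i k z.1 := by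
  rw [commAB_fun a b V ha hb hV i]
  exact pder_p_aff _ _ (fun m => (smooth_gA a V ha hV i m).add (smooth_gB2 a V ha hV i m))
    ((smooth_hA b V hb hV i).add (smooth_hB2 b V hb hV i)) k z

include ha hb hV in
lemma pder_p_A1 (i k : Fin n) (z : (Fin n → ℝ) × (Fin n → ℝ)) :
    pder_p (fun z' : (Fin n → ℝ) × (Fin n → ℝ) => -(∑ j, Kp a b j z' * Vqq V j i z'.1)) k z
      = gA a V i k z.1 := by
  rw [A1_fun a b V i]
  exact pder_p_aff _ _ (fun m => smooth_gA a V ha hV i m) (smooth_hA b V hb hV i) k z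

include ha hb in
lemma opA_zero (z : (Fin n → ℝ) × (Fin n → ℝ)) :
    opA a b (fun _ => (0:ℝ)) z = 0 := by
  rw [opA]
  have h1 : ∀ j, pder_q (fun _ : (Fin n → ℝ) × (Fin n → ℝ) => (0:ℝ)) j z = 0 := by
    intro j; rw [pder_q, fderiv_fun_const]; simp
  have h2 : ∀ j, pder_p (fun _ : (Fin n → ℝ) × (Fin n → ℝ) => (0:ℝ)) j z = 0 := by
    intro j; rw [pder_p, fderiv_fun_const]; simp
  simp [h1, h2]

include ha hb hV in
lemma opA_G1 (i : Fin n) (z : (Fin n → ℝ) × (Fin n → ℝ)) :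
    opA a b (fun z' => -(Vq V i z'.1)) z = -(∑ j, Kp a b j z * Vqq V j i z.1) := by
  rw [opA_fst a b ha hb (fun q => -(Vq V i q)) ((smooth_fd hV _).neg) z]
  rw [← Finset.sum_neg_distrib]
  refine Finset.sum_congr rfl fun j _ => ?_
  have hv : fderiv ℝ (Vq V i) z.1 (Pi.single j 1) = Vqq V j i z.1 := rfl
  rw [fderiv_fun_neg, ContinuousLinearMap.neg_apply, hv]
  ring

include ha hb hV in
lemma opD_coord (i : Fin n) (z : (Fin n → ℝ) × (Fin n → ℝ)) :
    opD a b V (fun w => w.2 i) z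
      = -(∑ k, Vq V k z.1 * (gA a V i k z.1 + gB2 a V i k z.1))
        - ∑ k, Vq V k z.1 * gA a V i k z.1 := by
  rw [opD]
  have t1 : opB V (commAB a b V (fun w => w.2 i)) z
      = -(∑ k, Vq V k z.1 * (gA a V i k z.1 + gB2 a V i k z.1)) := by
    rw [opB]
    refine congrArg Neg.neg (Finset.sum_congr rfl fun k _ => ?_)
    rw [pder_p_commAB a b V ha hb hV i k z]
    rfl
  have t2 : commAB a b V (opB V (fun w => w.2 i)) z = ∑ k, Vq V k z.1 * gA a V i k z.1 := by
    rw [opB_coord_fun V i, commAB]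
    have hz : opB V (fun z' : (Fin n → ℝ) × (Fin n → ℝ) => -(Vq V i z'.1)) = fun _ => (0:ℝ) := by
      funext w
      rw [opB]
      have : ∀ j : Fin n, pder_p (fun z' : (Fin n → ℝ) × (Fin n → ℝ) => -(Vq V i z'.1)) j w
          = 0 := fun j => pder_p_fst (((smooth_fd hV (Pi.single i 1)).neg).differentiable (by simp) _) j
      simp [this]
    rw [hz, opA_zero a b ha hb z]
    have hA1 : opA a b (fun z' : (Fin n → ℝ) × (Fin n → ℝ) => -(Vq V i z'.1))
        = fun z' => -(∑ j, Kp a b j z' * Vqq V j i z'.1) :=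
      funext fun z' => opA_G1 a b V ha hb hV i z'
    rw [hA1, opB, zero_sub, neg_neg]
    refine Finset.sum_congr rfl fun k _ => ?_
    rw [pder_p_A1 a b V ha hb hV i k z]
    rfl
  rw [t1, t2]

include ha hV in
lemma fderiv_VN2 (τ : ℝ) (i : Fin n) (q : Fin n → ℝ) :
    fderiv ℝ (VN2 a V τ) q (Pi.single i 1)
      = Vq V i q - (τ ^ 2 / 12) * ∑ j, ∑ k,
          (fderiv ℝ (a j k) q (Pi.single i 1) * Vq V j q * Vq V k q
            + a j k q * (Vqq V i j q * Vq V k q + Vq V j q * Vqq V i k q)) := by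
  have hVq : ∀ j : Fin n, HasFDerivAt (fun q' => fderiv ℝ V q' (Pi.single j 1))
      (fderiv ℝ (Vq V j) q) q := fun j => (diffAt (smooth_fd hV _) q).hasFDerivAt
  have H : HasFDerivAt (VN2 a V τ)
      (fderiv ℝ V q - (τ ^ 2 / 12) • ∑ j, ∑ k,
        ((a j k q * fderiv ℝ V q (Pi.single j 1)) • (fderiv ℝ (Vq V k) q)
          + fderiv ℝ V q (Pi.single k 1) •
            (a j k q • (fderiv ℝ (Vq V j) q)
              + fderiv ℝ V q (Pi.single j 1) • fderiv ℝ (a j k) q))) q := by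
    exact (diffAt hV q).hasFDerivAt.sub
      ((HasFDerivAt.fun_sum (fun j _ => HasFDerivAt.fun_sum (fun k _ =>
        (((diffAt (ha j k) q).hasFDerivAt.mul (hVq j)).mul (hVq k))))).const_mul _)
  rw [H.fderiv]
  simp only [ContinuousLinearMap.sub_apply, ContinuousLinearMap.smul_apply,
    ContinuousLinearMap.sum_apply, ContinuousLinearMap.add_apply, smul_eq_mul]
  have eV : ∀ j : Fin n, fderiv ℝ V q (Pi.single j 1) = Vq V j q := fun _ => rfl
  have eQ : ∀ j k : Fin n, fderiv ℝ (Vq V k) q (Pi.single j 1) = Vqq V j k q := fun _ _ => rfl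
  simp only [eV, eQ]
  congr 1
  congr 1
  exact Finset.sum_congr rfl fun j _ => Finset.sum_congr rfl fun k _ => by ring

end

end N2Aux

open N2Aux in
/-- If `a_{jk} = a_{kj}`, then `(B + (τ²/24) D) pᵢ = −∂V_{N2}/∂qᵢ`: the operator
`B + (τ²/24) D` is the momentum-version Lie operator of the modified potential `V_{N2}`,
so the extended scheme N2 is a symplectic splitting scheme for the modified Hamiltonian
`J_{N2} = K + V_{N2}`. -/
theorem modified_potential_N2 {n : ℕ} (a : Fin n → Fin n → (Fin n → ℝ) → ℝ)
    (b : Fin n → (Fin n → ℝ) → ℝ) (V : (Fin n → ℝ) → ℝ)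
    (ha : ∀ i j, ContDiff ℝ (⊤ : ℕ∞) (a i j)) (hb : ∀ i, ContDiff ℝ (⊤ : ℕ∞) (b i))
    (hV : ContDiff ℝ (⊤ : ℕ∞) V) (hsym : ∀ i j, a i j = a j i)
    (τ : ℝ) (i : Fin n) (q p : Fin n → ℝ) :
    opB V (fun w => w.2 i) (q, p) + (τ ^ 2 / 24) * opD a b V (fun w => w.2 i) (q, p) =
      -fderiv ℝ (VN2 a V τ) q (Pi.single i 1) ∧
    opB V (fun w => w.2 i) (q, p) + (τ ^ 2 / 24) * opD a b V (fun w => w.2 i) (q, p) =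
      opB (VN2 a V τ) (fun w => w.2 i) (q, p) := by
  have e1 : ∀ j k : Fin n, a k j q = a j k q := fun j k => congrFun (hsym k j) q
  have e2 : ∀ j k : Fin n, fderiv ℝ (a k j) q (Pi.single i 1)
      = fderiv ℝ (a j k) q (Pi.single i 1) := fun j k => by rw [hsym k j]
  have e3 : ∀ j : Fin n, Vqq V j i q = Vqq V i j q := fun j => schwarz V hV j i q
  have hB : opB V (fun w => w.2 i) (q, p) = -(Vq V i q) := by
    rw [opB_coord V i (q, p)]; rfl
  have hD : opD a b V (fun w => w.2 i) (q, p)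
      = -(∑ k, Vq V k q * (gA a V i k q + gB2 a V i k q))
        - ∑ k, Vq V k q * gA a V i k q := opD_coord a b V ha hb hV i (q, p)
  have hVd := fderiv_VN2 a V ha hV τ i q
  have hL : (-(∑ k, Vq V k q * (gA a V i k q + gB2 a V i k q))
        - ∑ k, Vq V k q * gA a V i k q)
      = ∑ k, ∑ j, (4 * (a j k q * (Vqq V i j q * Vq V k q))
          + 2 * (fderiv ℝ (a j k) q (Pi.single i 1) * (Vq V j q * Vq V k q))) := by
    simp only [gA, gB2, ← Finset.sum_neg_distrib, ← Finset.sum_add_distrib, Finset.mul_sum,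
      ← Finset.sum_sub_distrib]
    refine Finset.sum_congr rfl fun k _ => Finset.sum_congr rfl fun j _ => ?_
    rw [e1 j k, e2 j k, e3 j]
    ring
  have hsw : ∑ j, ∑ k, a j k q * (Vq V j q * Vqq V i k q)
      = ∑ j, ∑ k, a j k q * (Vqq V i j q * Vq V k q) :=
    dsum_comm _ _ (fun x y => by rw [e1 x y]; ring)
  have hR : (∑ k, ∑ j, (4 * (a j k q * (Vqq V i j q * Vq V k q))
          + 2 * (fderiv ℝ (a j k) q (Pi.single i 1) * (Vq V j q * Vq V k q))))
      = 2 * ∑ j, ∑ k, (fderiv ℝ (a j k) q (Pi.single i 1) * Vq V j q * Vq V k q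
          + a j k q * (Vqq V i j q * Vq V k q + Vq V j q * Vqq V i k q)) := by
    rw [Finset.sum_comm]
    have hterm : ∀ j k : Fin n, (4 * (a j k q * (Vqq V i j q * Vq V k q))
          + 2 * (fderiv ℝ (a j k) q (Pi.single i 1) * (Vq V j q * Vq V k q)))
        = 2 * (fderiv ℝ (a j k) q (Pi.single i 1) * Vq V j q * Vq V k q
            + a j k q * (Vqq V i j q * Vq V k q + Vq V j q * Vqq V i k q))
          + 2 * (a j k q * (Vqq V i j q * Vq V k q))
          - 2 * (a j k q * (Vq V j q * Vqq V i k q)) := fun j k => by ring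
    simp only [hterm, Finset.sum_add_distrib, Finset.sum_sub_distrib, ← Finset.mul_sum]
    rw [hsw]
    ring
  have key : (-(∑ k, Vq V k q * (gA a V i k q + gB2 a V i k q))
        - ∑ k, Vq V k q * gA a V i k q)
      = 2 * ∑ j, ∑ k, (fderiv ℝ (a j k) q (Pi.single i 1) * Vq V j q * Vq V k q
          + a j k q * (Vqq V i j q * Vq V k q + Vq V j q * Vqq V i k q)) := by
    rw [hL, hR]
  constructor
  · rw [hB, hD, hVd, key]
    ring
  · rw [opB_coord (VN2 a V τ) i (q, p)]
    show _ = -fderiv ℝ (VN2 a V τ) q (Pi.single i 1)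
    rw [hB, hD, hVd, key]
    ring
end
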